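/- The cardinality of TrSSYT(g,r,i) equals the cardinality of TrSSYT(g,r,r+1−i) for all 1 ≤ i ≤ r. -/

import Mathlib

/-- A transposed semistandard Young tableau with at most r+1 rows and content (i^g):
rows strictly increase left to right, columns weakly increase bottom to top,
each of 1,…,g appears exactly i times. Cells are `some v` (filled) or `none`. -/
structure TrSSYT (g r i : ℕ) where
  entry : Fin (r+1) → ℕ → Option ℕ
  left : ∀ (row : Fin (r+1)) (j j' : ℕ), (entry row j).isSome → j' ≤ j → (entry row j').isSome
  down : ∀ (row row' : Fin (r+1)) (j : ℕ), (entry row j).isSome → row' ≤ row → (entry row' j).isSome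
  vals : ∀ (row : Fin (r+1)) (j : ℕ) (v : ℕ), entry row j = some v → 1 ≤ v ∧ v ≤ g
  content : ∀ v : ℕ, 1 ≤ v → v ≤ g →
    {p : Fin (r+1) × ℕ | entry p.1 p.2 = some v}.ncard = i
  row_strict : ∀ (row : Fin (r+1)) (j j' : ℕ) (a b : ℕ),
    entry row j = some a → entry row j' = some b → j < j' → a < b
  col_weak : ∀ (row row' : Fin (r+1)) (j : ℕ) (a b : ℕ),
    entry row j = some a → entry row' j = some b → row < row' → a ≤ b

open Finset

noncomputable section
open scoped Classical

/-- j-th smallest element of a finset of naturals, as an option. -/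
def nthO (A : Finset ℕ) (j : ℕ) : Option ℕ :=
  if h : j < A.card then some (A.orderEmbOfFin rfl ⟨j, h⟩) else none

lemma nthO_isSome {A : Finset ℕ} {j : ℕ} : (nthO A j).isSome ↔ j < A.card := by
  unfold nthO; split <;> simp_all

lemma nthO_eq_some {A : Finset ℕ} {j : ℕ} (h : j < A.card) :
    nthO A j = some (A.orderEmbOfFin rfl ⟨j, h⟩) := by
  unfold nthO; rw [dif_pos h]

lemma nthO_mem {A : Finset ℕ} {j v : ℕ} (h : nthO A j = some v) : v ∈ A := by
  unfold nthO at h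
  split at h
  · cases h; exact A.orderEmbOfFin_mem rfl _
  · cases h

lemma nthO_lt_card {A : Finset ℕ} {j v : ℕ} (h : nthO A j = some v) : j < A.card := by
  by_contra hc; unfold nthO at h; rw [dif_neg hc] at h; cases h

lemma nthO_strictMono {A : Finset ℕ} {j j' a b : ℕ}
    (h : nthO A j = some a) (h' : nthO A j' = some b) (hjj : j < j') : a < b := by
  have hj := nthO_lt_card h; have hj' := nthO_lt_card h'
  rw [nthO_eq_some hj] at h; rw [nthO_eq_some hj'] at h'
  cases h; cases h'
  exact (A.orderEmbOfFin rfl).strictMono (show (⟨j, hj⟩ : Fin A.card) < ⟨j', hj'⟩ from hjj)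

lemma nthO_surj {A : Finset ℕ} {v : ℕ} (h : v ∈ A) : ∃ j, nthO A j = some v := by
  have : v ∈ Set.range (A.orderEmbOfFin rfl) := by rw [A.range_orderEmbOfFin rfl]; exact h
  obtain ⟨k, hk⟩ := this
  exact ⟨k, by rw [nthO_eq_some k.2]; simp [hk]⟩

lemma card_filter_le_nthO {A : Finset ℕ} {j : ℕ} (h : j < A.card) :
    (A.filter (· ≤ A.orderEmbOfFin rfl ⟨j, h⟩)).card = j + 1 := by
  have : A.filter (· ≤ A.orderEmbOfFin rfl ⟨j, h⟩)
      = (Finset.Iic (⟨j, h⟩ : Fin A.card)).image (A.orderEmbOfFin rfl) := by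
    ext x
    simp only [mem_filter, mem_image, Finset.mem_Iic]
    constructor
    · rintro ⟨hxA, hxle⟩
      have : x ∈ Set.range (A.orderEmbOfFin rfl) := by rw [A.range_orderEmbOfFin rfl]; exact hxA
      obtain ⟨k, hk⟩ := this
      refine ⟨k, ?_, hk⟩
      rw [← hk] at hxle
      exact (A.orderEmbOfFin rfl).le_iff_le.mp hxle
    · rintro ⟨k, hk, rfl⟩
      exact ⟨A.orderEmbOfFin_mem rfl k, (A.orderEmbOfFin rfl).le_iff_le.mpr hk⟩
  rw [this, Finset.card_image_of_injective _ (A.orderEmbOfFin rfl).injective, Fin.card_Iic]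

lemma nthO_le_of_card_filter {A : Finset ℕ} {j v : ℕ}
    (h : j + 1 ≤ (A.filter (· ≤ v)).card) :
    ∃ hj : j < A.card, A.orderEmbOfFin rfl ⟨j, hj⟩ ≤ v := by
  have hj : j < A.card :=
    lt_of_lt_of_le h (card_le_card (filter_subset _ _))
  refine ⟨hj, ?_⟩
  by_contra hc
  push_neg at hc
  have hsub : A.filter (· ≤ v) ⊆ (Finset.Iio (⟨j, hj⟩ : Fin A.card)).image (A.orderEmbOfFin rfl) := by
    intro x hx
    rw [mem_filter] at hx
    have : x ∈ Set.range (A.orderEmbOfFin rfl) := by rw [A.range_orderEmbOfFin rfl]; exact hx.1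
    obtain ⟨k, hk⟩ := this
    rw [mem_image]
    refine ⟨k, Finset.mem_Iio.mpr ?_, hk⟩
    by_contra hkj
    push_neg at hkj
    have h5 := (A.orderEmbOfFin rfl).le_iff_le.mpr hkj
    rw [hk] at h5
    exact absurd (le_trans h5 hx.2) (not_le.mpr hc)
  have := card_le_card hsub
  rw [Finset.card_image_of_injective _ (A.orderEmbOfFin rfl).injective, Fin.card_Iio] at this
  simp only [Fin.val_mk] at this
  omega

/-- Dominance implies pointwise comparison of sorted enumerations. -/
lemma nthO_dom {A B : Finset ℕ}
    (hd : ∀ t, (B.filter (· ≤ t)).card ≤ (A.filter (· ≤ t)).card)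
    {j b : ℕ} (hB : nthO B j = some b) : ∃ a, nthO A j = some a ∧ a ≤ b := by
  have hj := nthO_lt_card hB
  rw [nthO_eq_some hj] at hB
  cases hB
  have h1 : j + 1 ≤ (B.filter (· ≤ B.orderEmbOfFin rfl ⟨j, hj⟩)).card :=
    (card_filter_le_nthO hj).ge
  have h2 := le_trans h1 (hd _)
  obtain ⟨hjA, hle⟩ := nthO_le_of_card_filter h2
  exact ⟨_, nthO_eq_some hjA, hle⟩

/-- A downward-closed subset of `range N` is an initial segment. -/
lemma lowerset_eq_range {S : Finset ℕ}
    (hdc : ∀ j ∈ S, ∀ k, k ≤ j → k ∈ S) : S = Finset.range S.card := by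
  ext j
  rw [Finset.mem_range]
  constructor
  · intro hj
    have : Finset.range (j + 1) ⊆ S := fun k hk =>
      hdc j hj k (by simpa using Nat.lt_succ_iff.mp (Finset.mem_range.mp hk))
    have := card_le_card this
    rw [Finset.card_range] at this
    omega
  · intro hj
    by_contra hc
    have : S ⊆ Finset.range j := by
      intro k hk
      rw [Finset.mem_range]
      by_contra hkj
      exact hc (hdc k hk j (by omega))
    have := card_le_card this
    rw [Finset.card_range] at this
    omega

end

noncomputable section
open scoped Classical

variable {g r i : ℕ}

lemma TrSSYT.entry_lb (T : TrSSYT g r i) (ρ : Fin (r+1)) :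
    ∀ j v, T.entry ρ j = some v → j + 1 ≤ v := by
  intro j
  induction j with
  | zero => intro v h; exact (T.vals ρ 0 v h).1
  | succ n ih =>
    intro v h
    have hs : (T.entry ρ n).isSome :=
      T.left ρ (n+1) n (by rw [h]; rfl) (Nat.le_succ n)
    obtain ⟨w, hw⟩ := Option.isSome_iff_exists.mp hs
    have h1 := ih w hw
    have h2 := T.row_strict ρ n (n+1) w v hw h (Nat.lt_succ_self n)
    omega

lemma TrSSYT.pos_lt_g (T : TrSSYT g r i) {ρ : Fin (r+1)} {j v : ℕ}
    (h : T.entry ρ j = some v) : j < g := by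
  have h1 := T.entry_lb ρ j v h
  have h2 := (T.vals ρ j v h).2
  omega

lemma TrSSYT.row_unique (T : TrSSYT g r i) {ρ : Fin (r+1)} {j j' v : ℕ}
    (h : T.entry ρ j = some v) (h' : T.entry ρ j' = some v) : j = j' := by
  rcases lt_trichotomy j j' with hl | he | hl
  · exact absurd (T.row_strict ρ j j' v v h h' hl) (lt_irrefl v)
  · exact he
  · exact absurd (T.row_strict ρ j' j v v h' h hl) (lt_irrefl v)

/-- positions filled in a row -/
def posSet (T : TrSSYT g r i) (ρ : Fin (r+1)) : Finset ℕ :=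
  (Finset.range g).filter (fun j => (T.entry ρ j).isSome)

/-- values appearing in a row -/
def rowSet (T : TrSSYT g r i) (ρ : Fin (r+1)) : Finset ℕ :=
  (posSet T ρ).image (fun j => (T.entry ρ j).getD 0)

lemma mem_posSet {T : TrSSYT g r i} {ρ : Fin (r+1)} {j : ℕ} :
    j ∈ posSet T ρ ↔ (T.entry ρ j).isSome := by
  unfold posSet
  rw [mem_filter, Finset.mem_range]
  constructor
  · exact fun h => h.2
  · intro h
    obtain ⟨v, hv⟩ := Option.isSome_iff_exists.mp h
    exact ⟨T.pos_lt_g hv, h⟩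

lemma mem_rowSet {T : TrSSYT g r i} {ρ : Fin (r+1)} {v : ℕ} :
    v ∈ rowSet T ρ ↔ ∃ j, T.entry ρ j = some v := by
  unfold rowSet
  rw [mem_image]
  constructor
  · rintro ⟨j, hj, rfl⟩
    obtain ⟨w, hw⟩ := Option.isSome_iff_exists.mp (mem_posSet.mp hj)
    exact ⟨j, by rw [hw]; rfl⟩
  · rintro ⟨j, hj⟩
    exact ⟨j, mem_posSet.mpr (by rw [hj]; rfl), by rw [hj]; rfl⟩

lemma getD_injOn (T : TrSSYT g r i) (ρ : Fin (r+1)) {S : Finset ℕ} (hS : S ⊆ posSet T ρ) :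
    Set.InjOn (fun j => (T.entry ρ j).getD 0) S := by
  intro a ha b hb hab
  obtain ⟨x, hx⟩ := Option.isSome_iff_exists.mp (mem_posSet.mp (hS ha))
  obtain ⟨y, hy⟩ := Option.isSome_iff_exists.mp (mem_posSet.mp (hS hb))
  simp only [hx, hy, Option.getD_some] at hab
  subst hab
  exact T.row_unique hx hy

lemma posSet_eq_range (T : TrSSYT g r i) (ρ : Fin (r+1)) :
    posSet T ρ = Finset.range (posSet T ρ).card := by
  apply lowerset_eq_range
  intro j hj k hk
  exact mem_posSet.mpr (T.left ρ j k (mem_posSet.mp hj) hk)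

lemma card_rowSet (T : TrSSYT g r i) (ρ : Fin (r+1)) :
    (rowSet T ρ).card = (posSet T ρ).card :=
  Finset.card_image_of_injOn (getD_injOn T ρ (le_refl _))

lemma entry_isSome_iff (T : TrSSYT g r i) (ρ : Fin (r+1)) (j : ℕ) :
    (T.entry ρ j).isSome ↔ j < (rowSet T ρ).card := by
  rw [card_rowSet, ← Finset.mem_range, ← posSet_eq_range, mem_posSet]

/-- key: entries of a row are exactly the sorted enumeration of its value set -/
lemma entry_eq_nthO (T : TrSSYT g r i) (ρ : Fin (r+1)) (j : ℕ) :
    T.entry ρ j = nthO (rowSet T ρ) j := by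
  by_cases hj : j < (rowSet T ρ).card
  · have hFmem : ∀ k : Fin (rowSet T ρ).card,
        (fun k : Fin (rowSet T ρ).card => (T.entry ρ k).getD 0) k ∈ rowSet T ρ := by
      intro k
      obtain ⟨v, hv⟩ := Option.isSome_iff_exists.mp ((entry_isSome_iff T ρ k).mpr k.2)
      show (T.entry ρ ↑k).getD 0 ∈ rowSet T ρ
      rw [hv]
      exact mem_rowSet.mpr ⟨k, hv⟩
    have hFmono : StrictMono (fun k : Fin (rowSet T ρ).card => (T.entry ρ k).getD 0) := by
      intro k k' hkk
      obtain ⟨v, hv⟩ := Option.isSome_iff_exists.mp ((entry_isSome_iff T ρ k).mpr k.2)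
      obtain ⟨w, hw⟩ := Option.isSome_iff_exists.mp ((entry_isSome_iff T ρ k').mpr k'.2)
      simp only [hv, hw, Option.getD_some]
      exact T.row_strict ρ k k' v w hv hw hkk
    have hu := Finset.orderEmbOfFin_unique (s := rowSet T ρ) rfl hFmem hFmono
    have := congrFun hu ⟨j, hj⟩
    simp only at this
    rw [nthO_eq_some hj, ← this]
    obtain ⟨v, hv⟩ := Option.isSome_iff_exists.mp ((entry_isSome_iff T ρ j).mpr hj)
    rw [hv]
    rfl
  · have h1 : T.entry ρ j = none := by
      rw [← Option.not_isSome_iff_eq_none, entry_isSome_iff]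
      exact hj
    have h2 : nthO (rowSet T ρ) j = none := by
      rw [← Option.not_isSome_iff_eq_none, nthO_isSome]
      exact hj
    rw [h1, h2]

lemma rowSet_subset (T : TrSSYT g r i) (ρ : Fin (r+1)) :
    rowSet T ρ ⊆ Finset.Icc 1 g := by
  intro v hv
  obtain ⟨j, hj⟩ := mem_rowSet.mp hv
  exact Finset.mem_Icc.mpr (T.vals ρ j v hj)

/-- positions whose value is at most t -/
def posT (T : TrSSYT g r i) (ρ : Fin (r+1)) (t : ℕ) : Finset ℕ :=
  (Finset.range g).filter (fun j => ∃ v, T.entry ρ j = some v ∧ v ≤ t)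

lemma posT_subset_posSet (T : TrSSYT g r i) (ρ : Fin (r+1)) (t : ℕ) :
    posT T ρ t ⊆ posSet T ρ := by
  intro j hj
  rw [posT, mem_filter] at hj
  obtain ⟨v, hv, _⟩ := hj.2
  exact mem_posSet.mpr (by rw [hv]; rfl)

lemma card_rowSet_filter (T : TrSSYT g r i) (ρ : Fin (r+1)) (t : ℕ) :
    ((rowSet T ρ).filter (· ≤ t)).card = (posT T ρ t).card := by
  unfold rowSet
  rw [Finset.filter_image]
  have hset : (posSet T ρ).filter (fun j => (T.entry ρ j).getD 0 ≤ t) = posT T ρ t := by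
    ext j
    rw [mem_filter, posT, mem_filter, Finset.mem_range]
    constructor
    · rintro ⟨hin, hle⟩
      obtain ⟨v, hv⟩ := Option.isSome_iff_exists.mp (mem_posSet.mp hin)
      rw [hv, Option.getD_some] at hle
      exact ⟨T.pos_lt_g hv, v, hv, hle⟩
    · rintro ⟨hjg, v, hv, hvt⟩
      refine ⟨mem_posSet.mpr (by rw [hv]; rfl), ?_⟩
      rw [hv, Option.getD_some]
      exact hvt
  rw [hset]
  exact Finset.card_image_of_injOn (getD_injOn T ρ (posT_subset_posSet T ρ t))

lemma posT_anti (T : TrSSYT g r i) {ρ ρ' : Fin (r+1)} (h : ρ ≤ ρ') (t : ℕ) :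
    posT T ρ' t ⊆ posT T ρ t := by
  intro j hj
  rw [posT, mem_filter] at hj ⊢
  obtain ⟨hjg, v, hv, hvt⟩ := hj
  refine ⟨hjg, ?_⟩
  have hs : (T.entry ρ j).isSome := T.down ρ' ρ j (by rw [hv]; rfl) h
  obtain ⟨w, hw⟩ := Option.isSome_iff_exists.mp hs
  rcases eq_or_lt_of_le h with he | hl
  · subst he
    rw [hv] at hw
    exact ⟨v, hv, hvt⟩
  · exact ⟨w, hw, le_trans (T.col_weak ρ ρ' j w v hw hv hl) hvt⟩

lemma rowSet_dom (T : TrSSYT g r i) {ρ ρ' : Fin (r+1)} (h : ρ ≤ ρ') (t : ℕ) :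
    ((rowSet T ρ').filter (· ≤ t)).card ≤ ((rowSet T ρ).filter (· ≤ t)).card := by
  rw [card_rowSet_filter, card_rowSet_filter]
  exact Finset.card_le_card (posT_anti T h t)

lemma rowSet_content (T : TrSSYT g r i) (v : ℕ) (h1 : 1 ≤ v) (h2 : v ≤ g) :
    (Finset.univ.filter (fun ρ => v ∈ rowSet T ρ)).card = i := by
  have hset : {p : Fin (r+1) × ℕ | T.entry p.1 p.2 = some v}
      = ↑((Finset.univ ×ˢ Finset.range g).filter (fun p => T.entry p.1 p.2 = some v)) := by
    ext p
    simp only [Set.mem_setOf_eq, Finset.coe_filter, Finset.mem_product, Finset.mem_univ,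
      Finset.mem_range, true_and]
    constructor
    · intro h
      exact ⟨T.pos_lt_g h, h⟩
    · exact fun h => h.2
  have hc := T.content v h1 h2
  rw [hset, Set.ncard_coe_finset] at hc
  refine Eq.trans ?_ hc
  refine (Finset.card_bij (fun p _ => p.1) ?_ ?_ ?_).symm
  · intro p hp
    rw [mem_filter] at hp
    exact mem_filter.mpr ⟨Finset.mem_univ _, mem_rowSet.mpr ⟨p.2, hp.2⟩⟩
  · intro p hp q hq hpq
    beta_reduce at hpq
    rw [mem_filter] at hp hq
    have : p.2 = q.2 := by
      apply T.row_unique (ρ := p.1) hp.2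
      rw [hpq]
      exact hq.2
    exact Prod.ext hpq this
  · intro ρ hρ
    rw [mem_filter] at hρ
    obtain ⟨j, hj⟩ := mem_rowSet.mp hρ.2
    refine ⟨(ρ, j), ?_, rfl⟩
    rw [mem_filter, Finset.mem_product]
    exact ⟨⟨Finset.mem_univ _, Finset.mem_range.mpr (T.pos_lt_g hj)⟩, hj⟩

end
noncomputable section
open scoped Classical
variable {g r i : ℕ}

lemma nthO_unique {A : Finset ℕ} {j j' v : ℕ}
    (h : nthO A j = some v) (h' : nthO A j' = some v) : j = j' := by
  rcases lt_trichotomy j j' with hl | he | hl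
  · exact absurd (nthO_strictMono h h' hl) (lt_irrefl v)
  · exact he
  · exact absurd (nthO_strictMono h' h hl) (lt_irrefl v)

lemma nthO_lb {A : Finset ℕ} (sub : A ⊆ Finset.Icc 1 g) {j v : ℕ}
    (h : nthO A j = some v) : j + 1 ≤ v := by
  have hj := nthO_lt_card h
  rw [nthO_eq_some hj] at h
  injection h with h
  subst h
  have hcard := card_filter_le_nthO hj
  have hsub : A.filter (· ≤ A.orderEmbOfFin rfl ⟨j, hj⟩)
      ⊆ Finset.Icc 1 (A.orderEmbOfFin rfl ⟨j, hj⟩) := by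
    intro x hx
    rw [mem_filter] at hx
    exact Finset.mem_Icc.mpr ⟨(Finset.mem_Icc.mp (sub hx.1)).1, hx.2⟩
  have hle := Finset.card_le_card hsub
  rw [Nat.card_Icc] at hle
  omega

/-- the conditions on a family of row sets -/
def RSCond (g r i : ℕ) (f : Fin (r+1) → Finset ℕ) : Prop :=
  (∀ ρ, f ρ ⊆ Finset.Icc 1 g) ∧
  (∀ ρ ρ', ρ ≤ ρ' → ∀ t, ((f ρ').filter (· ≤ t)).card ≤ ((f ρ).filter (· ≤ t)).card) ∧
  (∀ v, 1 ≤ v → v ≤ g → (Finset.univ.filter (fun ρ => v ∈ f ρ)).card = i)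

def RS (g r i : ℕ) := {f : Fin (r+1) → Finset ℕ // RSCond g r i f}

lemma filter_le_g_eq {A : Finset ℕ} (sub : A ⊆ Finset.Icc 1 g) :
    A.filter (· ≤ g) = A :=
  Finset.filter_true_of_mem (fun x hx => (Finset.mem_Icc.mp (sub hx)).2)

/-- the tableau built from a family of row sets -/
def mkT (f : Fin (r+1) → Finset ℕ) (hf : RSCond g r i f) : TrSSYT g r i where
  entry ρ j := nthO (f ρ) j
  left ρ j j' hs hle := by
    rw [nthO_isSome] at hs ⊢; omega
  down ρ ρ' j hs hle := by
    rw [nthO_isSome] at hs ⊢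
    have h := hf.2.1 ρ' ρ hle g
    rw [filter_le_g_eq (hf.1 ρ), filter_le_g_eq (hf.1 ρ')] at h
    omega
  vals ρ j v h := Finset.mem_Icc.mp (hf.1 ρ (nthO_mem h))
  row_strict ρ j j' a b h h' hjj := nthO_strictMono h h' hjj
  col_weak ρ ρ' j a b h h' hlt := by
    obtain ⟨a', ha', hab⟩ := nthO_dom (hf.2.1 ρ ρ' (le_of_lt hlt) ·) h'
    have h0 : nthO (f ρ) j = some a := h
    rw [h0] at ha'
    injection ha' with ha'
    omega
  content v h1 h2 := by
    show {p : Fin (r+1) × ℕ | nthO (f p.1) p.2 = some v}.ncard = i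
    have hset : {p : Fin (r+1) × ℕ | nthO (f p.1) p.2 = some v}
        = ↑((Finset.univ ×ˢ Finset.range g).filter (fun p => nthO (f p.1) p.2 = some v)) := by
      ext p
      simp only [Set.mem_setOf_eq, Finset.coe_filter, Finset.mem_product, Finset.mem_univ,
        Finset.mem_range, true_and, Set.mem_setOf_eq]
      constructor
      · intro h
        have := nthO_lb (hf.1 p.1) h
        have hvg : v ≤ g := (Finset.mem_Icc.mp (hf.1 p.1 (nthO_mem h))).2
        exact ⟨by omega, h⟩
      · exact fun h => h.2
    rw [hset, Set.ncard_coe_finset]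
    refine Eq.trans ?_ (hf.2.2 v h1 h2)
    refine Finset.card_bij (fun p _ => p.1) ?_ ?_ ?_
    · intro p hp
      rw [Finset.mem_filter] at hp
      exact Finset.mem_filter.mpr ⟨Finset.mem_univ _, nthO_mem hp.2⟩
    · intro p hp q hq hpq
      beta_reduce at hpq
      rw [Finset.mem_filter] at hp hq
      have h2 : p.2 = q.2 := by
        apply nthO_unique hp.2
        rw [hpq]
        exact hq.2
      exact Prod.ext hpq h2
    · intro ρ hρ
      rw [Finset.mem_filter] at hρ
      obtain ⟨j, hj⟩ := nthO_surj hρ.2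
      have hjv := nthO_lb (hf.1 ρ) hj
      have hvg : v ≤ g := (Finset.mem_Icc.mp (hf.1 ρ (nthO_mem hj))).2
      refine ⟨(ρ, j), ?_, rfl⟩
      rw [Finset.mem_filter, Finset.mem_product]
      exact ⟨⟨Finset.mem_univ _, Finset.mem_range.mpr (by omega)⟩, hj⟩

lemma TrSSYT.ext' {T T' : TrSSYT g r i} (h : T.entry = T'.entry) : T = T' := by
  cases T; cases T'; cases h; rfl

/-- bijection between tableaux and admissible families of row sets -/
def equivA : TrSSYT g r i ≃ RS g r i where
  toFun T := ⟨rowSet T, rowSet_subset T, fun ρ ρ' h t => rowSet_dom T h t, rowSet_content T⟩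
  invFun F := mkT F.1 F.2
  left_inv T := by
    apply TrSSYT.ext'
    funext ρ j
    exact (entry_eq_nthO T ρ j).symm
  right_inv F := by
    apply Subtype.ext
    funext ρ
    ext v
    show v ∈ rowSet (mkT F.1 F.2) ρ ↔ v ∈ F.1 ρ
    rw [mem_rowSet]
    constructor
    · rintro ⟨j, hj⟩
      exact nthO_mem (show nthO (F.1 ρ) j = some v from hj)
    · intro hv
      obtain ⟨j, hj⟩ := nthO_surj hv
      exact ⟨j, hj⟩

/-- complement in [1,g] and reverse the rows -/
def compRev (g : ℕ) {r : ℕ} (f : Fin (r+1) → Finset ℕ) : Fin (r+1) → Finset ℕ :=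
  fun ρ => Finset.Icc 1 g \ f ρ.rev

lemma compRev_compRev {f : Fin (r+1) → Finset ℕ} (sub : ∀ ρ, f ρ ⊆ Finset.Icc 1 g) :
    compRev g (compRev g f) = f := by
  funext ρ
  show Finset.Icc 1 g \ (Finset.Icc 1 g \ f ρ.rev.rev) = f ρ
  rw [Fin.rev_rev]
  exact Finset.sdiff_sdiff_eq_self (sub ρ)

lemma card_filter_compRev {f : Fin (r+1) → Finset ℕ} (sub : ∀ ρ, f ρ ⊆ Finset.Icc 1 g)
    (σ : Fin (r+1)) (t : ℕ) :
    ((compRev g f σ).filter (· ≤ t)).card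
      = ((Finset.Icc 1 g).filter (· ≤ t)).card - ((f σ.rev).filter (· ≤ t)).card := by
  have hd : (compRev g f σ).filter (· ≤ t)
      = (Finset.Icc 1 g).filter (· ≤ t) \ (f σ.rev).filter (· ≤ t) := by
    ext x
    simp only [compRev, Finset.mem_filter, Finset.mem_sdiff]
    tauto
  rw [hd, Finset.card_sdiff_of_subset (Finset.filter_subset_filter _ (sub σ.rev))]

lemma RSCond_compRev {f : Fin (r+1) → Finset ℕ} (hf : RSCond g r i f) :
    RSCond g r (r+1-i) (compRev g f) := by
  obtain ⟨sub, dom, cont⟩ := hf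
  refine ⟨fun ρ => Finset.sdiff_subset, ?_, ?_⟩
  · intro ρ ρ' h t
    rw [card_filter_compRev sub, card_filter_compRev sub]
    exact Nat.sub_le_sub_left (dom ρ'.rev ρ.rev (Fin.rev_le_rev.mpr h) t) _
  · intro v h1 h2
    have hvIcc : v ∈ Finset.Icc 1 g := Finset.mem_Icc.mpr ⟨h1, h2⟩
    have himg : Finset.univ.filter (fun ρ => v ∈ compRev g f ρ)
        = (Finset.univ.filter (fun ρ => v ∈ Finset.Icc 1 g \ f ρ)).image Fin.rev := by
      ext σ
      simp only [Finset.mem_filter, Finset.mem_image, Finset.mem_univ, true_and]; simp only [compRev]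
      constructor
      · intro h
        exact ⟨σ.rev, h, Fin.rev_rev σ⟩
      · rintro ⟨a, ha, rfl⟩
        rwa [Fin.rev_rev]
    rw [himg, Finset.card_image_of_injective _ Fin.rev_injective]
    have hpred : Finset.univ.filter (fun ρ : Fin (r+1) => v ∈ Finset.Icc 1 g \ f ρ)
        = Finset.univ.filter (fun ρ => ¬ (v ∈ f ρ)) := by
      apply Finset.filter_congr
      intro ρ _
      simp [Finset.mem_sdiff, hvIcc]
    rw [hpred, Finset.filter_not, Finset.card_sdiff_of_subset (Finset.filter_subset _ _),
      Finset.card_univ, Fintype.card_fin, cont v h1 h2]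

/-- the complementation bijection on families of row sets -/
def equivB (hi : i ≤ r + 1) : RS g r i ≃ RS g r (r+1-i) where
  toFun F := ⟨compRev g F.1, RSCond_compRev F.2⟩
  invFun F := ⟨compRev g F.1, by
    have h := RSCond_compRev F.2
    rwa [show r + 1 - (r + 1 - i) = i by omega] at h⟩
  left_inv F := Subtype.ext (compRev_compRev F.2.1)
  right_inv F := Subtype.ext (compRev_compRev F.2.1)

end

/-- |TrSSYT(g,r,i)| = |TrSSYT(g,r,r+1−i)| for 1 ≤ i ≤ r. -/
theorem stmt_6 (g r i : ℕ) (h1 : 1 ≤ i) (h2 : i ≤ r) :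
    Nat.card (TrSSYT g r i) = Nat.card (TrSSYT g r (r + 1 - i)) := by
  rw [Nat.card_congr (equivA : TrSSYT g r i ≃ RS g r i),
    Nat.card_congr (equivB (g := g) (show i ≤ r + 1 by omega)),
    ← Nat.card_congr (equivA : TrSSYT g r (r + 1 - i) ≃ RS g r (r + 1 - i))]
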